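/- arXiv:2109.08778 — 3 statements merged into one kernel-verified Lean document; each statement's English description precedes it below -/
import Mathlib

section
/- Let p ≥ 5 be prime, n ∈ ℕ, and p ≤ i < p². Then p divides the binomial coefficient C(np², i), and p divides the falling factorial (np²+k−1)(np²+k−2)⋯(np²+k−i) for any fixed rational k with p-integral value, in the sense that the product of these two quantities has p-adic valuation at least 2. -/
open Finset

private lemma stmt8_val_nonneg {p : ℕ} [Fact p.Prime] {q : ℚ} (hq : ¬ p ∣ q.den) :
    0 ≤ padicValRat p q := by
  simp [padicValRat, padicValNat.eq_zero_of_not_dvd hq]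

private lemma stmt8_prod_val_nonneg {p : ℕ} [Fact p.Prime] (s : Finset ℕ) (f : ℕ → ℚ)
    (h0 : ∀ j ∈ s, f j ≠ 0) (h1 : ∀ j ∈ s, 0 ≤ padicValRat p (f j)) :
    0 ≤ padicValRat p (∏ j ∈ s, f j) := by
  classical
  induction s using Finset.induction_on with
  | empty => simp
  | @insert a s ha ih =>
    have hfa : f a ≠ 0 := h0 a (mem_insert_self a s)
    have hprod : (∏ j ∈ s, f j) ≠ 0 :=
      Finset.prod_ne_zero_iff.mpr fun j hj => h0 j (mem_insert_of_mem hj)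
    rw [Finset.prod_insert ha, padicValRat.mul hfa hprod]
    have hA := h1 a (mem_insert_self a s)
    have hB := ih (fun j hj => h0 j (mem_insert_of_mem hj))
      (fun j hj => h1 j (mem_insert_of_mem hj))
    linarith

/-- Let `p ≥ 5` be prime, `n ∈ ℕ`, and `p ≤ i < p²`.  Then `p` divides `C(np², i)`,
and for any fixed `p`-integral rational `k`, the product of `C(np², i)` with the
falling factorial `(np²+k−1)(np²+k−2)⋯(np²+k−i)` has `p`-adic valuation at
least `2`. -/
theorem stmt8 (p : ℕ) (hp : p.Prime) (hp5 : 5 ≤ p) (n i : ℕ)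
    (hpi : p ≤ i) (hip : i < p ^ 2) (k : ℚ) (hk : ¬ p ∣ k.den) :
    p ∣ (n * p ^ 2).choose i ∧
    (((n * p ^ 2).choose i : ℚ) * ∏ j ∈ Finset.range i, ((n * p ^ 2 : ℚ) + k - 1 - j) ≠ 0 →
      2 ≤ padicValRat p
        (((n * p ^ 2).choose i : ℚ) * ∏ j ∈ Finset.range i, ((n * p ^ 2 : ℚ) + k - 1 - j))) := by
  haveI : Fact p.Prime := ⟨hp⟩
  have hp0 : 0 < p := hp.pos
  have hi0 : 0 < i := lt_of_lt_of_le hp0 hpi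
  -- Part 1 : p ∣ C(np², i)
  have hdvd : p ∣ (n * p ^ 2).choose i := by
    rcases eq_or_ne ((n * p ^ 2).choose i) 0 with hC | hC
    · simp [hC]
    · have hile : i ≤ n * p ^ 2 := by
        by_contra h
        exact hC (Nat.choose_eq_zero_iff.mpr (lt_of_not_ge h))
      have hm0 : 0 < n * p ^ 2 := lt_of_lt_of_le hi0 hile
      have hid : (n * p ^ 2) * (n * p ^ 2 - 1).choose (i - 1) =
          (n * p ^ 2).choose i * i := by
        have h := Nat.add_one_mul_choose_eq (n * p ^ 2 - 1) (i - 1)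
        have h1 : n * p ^ 2 - 1 + 1 = n * p ^ 2 := Nat.succ_pred_eq_of_pos hm0
        have h2 : i - 1 + 1 = i := Nat.succ_pred_eq_of_pos hi0
        rwa [h1, h2] at h
      have hsq : p ^ 2 ∣ (n * p ^ 2).choose i * i := by
        rw [← hid]; exact Dvd.dvd.mul_right (Dvd.dvd.mul_left dvd_rfl n) _
      have hmul0 : (n * p ^ 2).choose i * i ≠ 0 := Nat.mul_ne_zero hC hi0.ne'
      have h2le : 2 ≤ ((n * p ^ 2).choose i * i).factorization p :=
        (hp.pow_dvd_iff_le_factorization hmul0).mp hsq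
      rw [Nat.factorization_mul hC hi0.ne'] at h2le
      have hile1 : i.factorization p ≤ 1 := by
        by_contra h
        have : p ^ 2 ∣ i := (hp.pow_dvd_iff_le_factorization hi0.ne').mpr (by omega)
        exact absurd (Nat.le_of_dvd hi0 this) (not_le.mpr hip)
      have h1le : 1 ≤ ((n * p ^ 2).choose i).factorization p := by
        simp only [Finsupp.add_apply] at h2le; omega
      have := (hp.pow_dvd_iff_le_factorization hC).mpr h1le
      simpa using this
  refine ⟨hdvd, fun hne => ?_⟩
  have hCne : ((n * p ^ 2).choose i : ℚ) ≠ 0 := left_ne_zero_of_mul hne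
  have hPne : (∏ j ∈ Finset.range i, ((n * p ^ 2 : ℚ) + k - 1 - j)) ≠ 0 :=
    right_ne_zero_of_mul hne
  have hFne : ∀ j ∈ Finset.range i, ((n * p ^ 2 : ℚ) + k - 1 - (j : ℚ)) ≠ 0 :=
    Finset.prod_ne_zero_iff.mp hPne
  have hFj : ∀ j : ℕ, ((n * p ^ 2 : ℚ) + k - 1 - (j : ℚ)) =
      k + (((n : ℤ) * p ^ 2 - 1 - j : ℤ) : ℚ) := by
    intro j; push_cast; ring
  have hFden : ∀ j : ℕ, ¬ p ∣ ((n * p ^ 2 : ℚ) + k - 1 - (j : ℚ)).den := by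
    intro j hdv
    apply hk
    have h := Rat.add_den_dvd k (((n : ℤ) * p ^ 2 - 1 - j : ℤ) : ℚ)
    rw [Rat.den_intCast, mul_one] at h
    exact dvd_trans (by rwa [hFj j] at hdv) h
  -- choose r with  p ∣ k.num - r * k.den
  have hdenne : (k.den : ZMod p) ≠ 0 := by
    rw [Ne, ZMod.natCast_eq_zero_iff]; exact hk
  obtain ⟨r, hrk⟩ : ∃ r : ℤ, (p : ℤ) ∣ k.num - r * k.den := by
    refine ⟨(((k.num : ZMod p) * (k.den : ZMod p)⁻¹).val : ℤ), ?_⟩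
    rw [← ZMod.intCast_zmod_eq_zero_iff_dvd]
    push_cast
    rw [ZMod.natCast_val, ZMod.cast_id, mul_assoc, inv_mul_cancel₀ hdenne, mul_one, sub_self]
  -- choose the index j₀
  obtain ⟨j₀, hjlt, hcr⟩ : ∃ j₀ : ℕ, j₀ < p ∧
      (p : ℤ) ∣ ((n : ℤ) * p ^ 2 - 1 - j₀ + r) := by
    refine ⟨(((n : ℤ) * p ^ 2 - 1 + r) % p).toNat, ?_, ?_⟩
    · have h1 := Int.emod_lt_of_pos ((n : ℤ) * p ^ 2 - 1 + r)
        (show (0 : ℤ) < p by exact_mod_cast hp0)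
      have h2 := Int.emod_nonneg ((n : ℤ) * p ^ 2 - 1 + r)
        (show (p : ℤ) ≠ 0 by exact_mod_cast hp0.ne')
      omega
    · have h2 := Int.emod_nonneg ((n : ℤ) * p ^ 2 - 1 + r)
        (show (p : ℤ) ≠ 0 by exact_mod_cast hp0.ne')
      have h1 : (p : ℤ) ∣ ((n : ℤ) * p ^ 2 - 1 + r) - ((n : ℤ) * p ^ 2 - 1 + r) % p :=
        Int.dvd_self_sub_of_emod_eq rfl
      have h3 : (((((n : ℤ) * p ^ 2 - 1 + r) % p).toNat : ℤ)) =
          ((n : ℤ) * p ^ 2 - 1 + r) % p := Int.toNat_of_nonneg h2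
      have h4 : (n : ℤ) * p ^ 2 - 1 - ((((n : ℤ) * p ^ 2 - 1 + r) % p).toNat : ℤ) + r =
          ((n : ℤ) * p ^ 2 - 1 + r) - ((n : ℤ) * p ^ 2 - 1 + r) % p := by
        rw [h3]; ring
      rw [h4]; exact h1
  have hjmem : j₀ ∈ Finset.range i := Finset.mem_range.mpr (lt_of_lt_of_le hjlt hpi)
  have hFne₀ : ((n * p ^ 2 : ℚ) + k - 1 - (j₀ : ℚ)) ≠ 0 := hFne j₀ hjmem
  have hFj₀ : ((n * p ^ 2 : ℚ) + k - 1 - (j₀ : ℚ)) =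
      (k - (r : ℚ)) + (((n : ℤ) * p ^ 2 - 1 - j₀ + r : ℤ) : ℚ) := by
    push_cast; ring
  -- the two pieces of the distinguished factor have valuation ≥ 1 (when nonzero)
  have hq1 : (k - (r : ℚ)) ≠ 0 → 1 ≤ padicValRat p (k - (r : ℚ)) := by
    intro h1
    have hdq : ((k.den : ℤ) : ℚ) ≠ 0 := by
      exact_mod_cast (Nat.cast_ne_zero (R := ℚ)).mpr k.den_nz
    have hkden : k * ((k.den : ℤ) : ℚ) = ((k.num : ℤ) : ℚ) := by
      push_cast
      exact_mod_cast Rat.mul_den_eq_num k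
    have hnum : k - (r : ℚ) = ((k.num - r * k.den : ℤ) : ℚ) / ((k.den : ℤ) : ℚ) := by
      rw [eq_div_iff hdq, sub_mul, hkden]
      push_cast; ring
    have hnumne : ((k.num - r * k.den : ℤ) : ℚ) ≠ 0 := by
      intro h; rw [hnum, h, zero_div] at h1; exact h1 rfl
    have hnumint : k.num - r * k.den ≠ 0 := by exact_mod_cast hnumne
    have hv1 : 1 ≤ padicValInt p (k.num - r * k.den) := by
      have := (padicValInt_dvd_iff 1 (k.num - r * k.den)).mp (by simpa using hrk)
      tauto
    have hv2 : padicValInt p ((k.den : ℤ)) = 0 :=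
      padicValInt.eq_zero_of_not_dvd (by exact_mod_cast hk)
    rw [hnum, padicValRat.div hnumne hdq, padicValRat.of_int, padicValRat.of_int, hv2]
    have hv1' : (1 : ℤ) ≤ (padicValInt p (k.num - r * k.den) : ℤ) := by exact_mod_cast hv1
    omega
  have hq2 : (((n : ℤ) * p ^ 2 - 1 - j₀ + r : ℤ) : ℚ) ≠ 0 →
      1 ≤ padicValRat p (((n : ℤ) * p ^ 2 - 1 - j₀ + r : ℤ) : ℚ) := by
    intro h2
    have hne' : (n : ℤ) * p ^ 2 - 1 - j₀ + r ≠ 0 := by exact_mod_cast h2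
    rw [padicValRat.of_int]
    have := (padicValInt_dvd_iff 1 ((n : ℤ) * p ^ 2 - 1 - j₀ + r)).mp (by simpa using hcr)
    have hv : 1 ≤ padicValInt p ((n : ℤ) * p ^ 2 - 1 - j₀ + r) := by tauto
    exact_mod_cast hv
  have hval₀ : 1 ≤ padicValRat p ((n * p ^ 2 : ℚ) + k - 1 - (j₀ : ℚ)) := by
    rcases eq_or_ne (k - (r : ℚ)) 0 with h1 | h1
    · rw [hFj₀, h1, zero_add]
      apply hq2
      rw [hFj₀, h1, zero_add] at hFne₀
      exact hFne₀
    · rcases eq_or_ne (((n : ℤ) * p ^ 2 - 1 - j₀ + r : ℤ) : ℚ) 0 with h2 | h2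
      · rw [hFj₀, h2, add_zero]
        exact hq1 h1
      · rw [hFj₀]
        refine le_trans (le_min (hq1 h1) (hq2 h2))
          (padicValRat.min_le_padicValRat_add (p := p) ?_)
        rw [← hFj₀]; exact hFne₀
  -- assemble
  have hsplit : (∏ j ∈ Finset.range i, ((n * p ^ 2 : ℚ) + k - 1 - (j : ℚ))) =
      ((n * p ^ 2 : ℚ) + k - 1 - (j₀ : ℚ)) *
        ∏ j ∈ (Finset.range i).erase j₀, ((n * p ^ 2 : ℚ) + k - 1 - (j : ℚ)) :=
    (Finset.mul_prod_erase _ _ hjmem).symm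
  have hErest : (∏ j ∈ (Finset.range i).erase j₀, ((n * p ^ 2 : ℚ) + k - 1 - (j : ℚ))) ≠ 0 :=
    Finset.prod_ne_zero_iff.mpr fun j hj => hFne j (Finset.mem_of_mem_erase hj)
  have hrest : 0 ≤ padicValRat p
      (∏ j ∈ (Finset.range i).erase j₀, ((n * p ^ 2 : ℚ) + k - 1 - (j : ℚ))) :=
    stmt8_prod_val_nonneg _ _ (fun j hj => hFne j (Finset.mem_of_mem_erase hj))
      (fun j _ => stmt8_val_nonneg (hFden j))
  have hCval : 1 ≤ padicValRat p ((n * p ^ 2).choose i : ℚ) := by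
    rw [padicValRat.of_nat]
    have hCpos : 0 < (n * p ^ 2).choose i :=
      Nat.pos_of_ne_zero (by exact_mod_cast hCne)
    exact_mod_cast one_le_padicValNat_of_dvd hCpos.ne' hdvd
  rw [padicValRat.mul hCne hPne, hsplit,
    padicValRat.mul (hFne j₀ hjmem) hErest]
  linarith
end

section
/- Let p ≥ 5 be prime, n ∈ ℕ, k a p-integral rational, and p² ≤ i ≤ np². Then the falling factorial [np²+k−1]_i = (np²+k−1)(np²+k−2)⋯(np²+k−i) has p-adic valuation at least p·⌊i/p²⌋. -/
open Finset

lemma padicValRat_prod (p : ℕ) [Fact p.Prime] {ι : Type*} (s : Finset ι) (f : ι → ℚ)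
    (h : ∀ j ∈ s, f j ≠ 0) :
    padicValRat p (∏ j ∈ s, f j) = ∑ j ∈ s, padicValRat p (f j) := by
  classical
  induction s using Finset.induction with
  | empty => simp
  | @insert a s ha ih =>
    rw [Finset.prod_insert ha, Finset.sum_insert ha,
      padicValRat.mul (h a (mem_insert_self a s))
        (prod_ne_zero_iff.2 fun b hb => h b (mem_insert_of_mem hb)),
      ih (fun b hb => h b (mem_insert_of_mem hb))]

/-- Let `p ≥ 5` be prime, `n ∈ ℕ`, `k` a `p`-integral rational, and `p² ≤ i ≤ np²`.
Then the falling factorial `[np²+k−1]_i = (np²+k−1)(np²+k−2)⋯(np²+k−i)` has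
`p`-adic valuation at least `p·⌊i/p²⌋`. -/
theorem stmt9 (p : ℕ) (hp : p.Prime) (hp5 : 5 ≤ p) (n i : ℕ)
    (hi1 : p ^ 2 ≤ i) (hi2 : i ≤ n * p ^ 2) (k : ℚ) (hk : ¬ p ∣ k.den)
    (hne : ∏ j ∈ Finset.range i, ((n * p ^ 2 : ℚ) + k - 1 - j) ≠ 0) :
    ((p * (i / p ^ 2) : ℕ) : ℤ) ≤
      padicValRat p (∏ j ∈ Finset.range i, ((n * p ^ 2 : ℚ) + k - 1 - j)) := by
  haveI : Fact p.Prime := ⟨hp⟩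
  have hp0 : 0 < p := hp.pos
  set d : ℤ := (k.den : ℤ) with hdd
  have hd0 : d ≠ 0 := by positivity
  have hpd : ¬ (p : ℤ) ∣ d := by rw [hdd]; exact_mod_cast hk
  set N : ℤ := (n : ℤ) * p ^ 2 * d + k.num - d with hN
  -- each factor equals (N - d*j)/d
  have hfac : ∀ j : ℕ, ((n * p ^ 2 : ℚ) + k - 1 - j) = ((N - d * j : ℤ) : ℚ) / (d : ℚ) := by
    intro j
    have hd0' : (d : ℚ) ≠ 0 := by exact_mod_cast hd0
    rw [eq_div_iff hd0']
    push_cast [hN, hdd]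
    linear_combination Rat.mul_den_eq_num k
  have hne' : ∀ j ∈ range i, N - d * j ≠ 0 := by
    intro j hj h0
    apply prod_ne_zero_iff.1 hne j hj
    rw [hfac j, h0, Int.cast_zero, zero_div]
  -- valuation of each factor
  have hval : ∀ j ∈ range i, padicValRat p ((n * p ^ 2 : ℚ) + k - 1 - j)
      = (padicValInt p (N - d * j) : ℤ) := by
    intro j hj
    rw [hfac j]
    rw [padicValRat.div (q := ((N - d * j : ℤ) : ℚ)) (r := ((d : ℤ) : ℚ))
      (by exact_mod_cast hne' j hj) (by exact_mod_cast hd0)]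
    rw [padicValRat.of_int, padicValRat.of_int, padicValInt.eq_zero_of_not_dvd hpd]
    simp
  rw [padicValRat_prod p _ _ (prod_ne_zero_iff.1 hne), Finset.sum_congr rfl hval]
  -- choose residue r
  set r : ℕ := ((N : ZMod p) * ((d : ZMod p))⁻¹).val with hr
  have hrp : r < p := ZMod.val_lt _
  have hdz : (d : ZMod p) ≠ 0 := by
    rwa [Ne, ZMod.intCast_zmod_eq_zero_iff_dvd]
  set S : Finset ℕ := (range i).filter (fun j => (p : ℤ) ∣ N - d * j) with hS
  have hmem : ∀ m ∈ range (i / p), r + p * m ∈ S := by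
    intro m hm
    rw [hS, mem_filter, mem_range]
    constructor
    · have hm1 : m + 1 ≤ i / p := mem_range.1 hm
      have h2 : p * (m + 1) ≤ p * (i / p) := Nat.mul_le_mul_left _ hm1
      have h3 : p * (i / p) ≤ i := by rw [mul_comm]; exact Nat.div_mul_le_self i p
      have h4 : p * (m + 1) = p * m + p := by ring
      omega
    · rw [← ZMod.intCast_zmod_eq_zero_iff_dvd]
      have hrN : ((r : ZMod p)) = (N : ZMod p) * ((d : ZMod p))⁻¹ := by
        rw [hr]; simp [ZMod.natCast_val, ZMod.cast_id]
      have key : ((N : ZMod p)) - (d : ZMod p) * ((r : ZMod p) + (p : ZMod p) * m) = 0 := by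
        rw [hrN, ZMod.natCast_self, zero_mul, add_zero, mul_comm ((d : ZMod p)) _,
          mul_assoc, inv_mul_cancel₀ hdz, mul_one, sub_self]
      push_cast
      exact key
  have hcard : i / p ≤ S.card := by
    have := Finset.card_le_card_of_injOn (fun m => r + p * m) hmem
      (fun a _ b _ hab =>
        Nat.eq_of_mul_eq_mul_left hp0 (Nat.add_left_cancel hab))
    simpa using this
  have hsum : ((S.card : ℤ)) ≤ ∑ j ∈ range i, (padicValInt p (N - d * j) : ℤ) := by
    calc (S.card : ℤ) = ∑ j ∈ S, (1 : ℤ) := by simp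
      _ ≤ ∑ j ∈ S, (padicValInt p (N - d * j) : ℤ) := by
          apply Finset.sum_le_sum
          intro j hj
          rw [hS, mem_filter] at hj
          have h1 : (p : ℤ) ^ 1 ∣ N - d * j := by simpa using hj.2
          have := (padicValInt_dvd_iff (p := p) 1 (N - d * j)).1 h1
          rcases this with h | h
          · exact absurd h (hne' j hj.1)
          · exact_mod_cast h
      _ ≤ ∑ j ∈ range i, (padicValInt p (N - d * j) : ℤ) := by
          apply Finset.sum_le_sum_of_subset_of_nonneg (filter_subset _ _)
          intros; positivity
  have hfin : p * (i / p ^ 2) ≤ i / p := by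
    have h1 : i / p ^ 2 = i / p / p := by
      rw [Nat.div_div_eq_div_mul, sq]
    rw [h1, mul_comm]
    exact Nat.div_mul_le_self _ _
  calc ((p * (i / p ^ 2) : ℕ) : ℤ) ≤ (i / p : ℕ) := by exact_mod_cast hfin
    _ ≤ (S.card : ℤ) := by exact_mod_cast hcard
    _ ≤ _ := hsum
end

section
/- (Zagier's Taylor expansion formula) Let f be a holomorphic modular form of weight k on a congruence subgroup Γ′ (with Γ′ ⊆ Γ₁(4) if k is a half-integer), and define recursively f₀ = f, f₋₁ = 0, f_{n+1} = (Df_n − ((k+2n)/12)E₂f_n) − (n(n+k−1)/144)E₄f_{n−1}. Then for all n ≥ 0, Dⁿf = Σ_{i=0}^{n} C(n,i)·[n+k−1]↓[n+k−1−i]·f_{n−i}·(E₂/12)^i, where [x]↓[y] := x(x−1)⋯(y+1). -/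
namespace ZagierAux

/-- The Zagier coefficient. -/
def zc (k : ℚ) (n i : ℕ) : ℚ :=
  (n.choose i : ℚ) * (∏ j ∈ Finset.range i, ((n : ℚ) + k - 1 - j)) * (1 / 12) ^ i

lemma zc_zero (k : ℚ) (n : ℕ) : zc k n 0 = 1 := by simp [zc]

lemma zc_top (k : ℚ) (n : ℕ) : zc k n (n + 1) = 0 := by
  simp [zc, Nat.choose_succ_self]

lemma choose_cast (n m : ℕ) :
    (n.choose (m + 1) : ℚ) * ((m : ℚ) + 1) = (n.choose m : ℚ) * ((n : ℚ) - m) := by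
  rcases le_or_gt m n with h | h
  · have h0 : ((n.choose (m + 1) * (m + 1) : ℕ) : ℚ) = ((n.choose m * (n - m) : ℕ) : ℚ) := by
      exact_mod_cast congrArg (Nat.cast (R := ℚ)) (Nat.choose_succ_right_eq n m)
    push_cast [Nat.cast_sub h] at h0
    linarith [h0]
  · have h1 : n.choose (m + 1) = 0 := Nat.choose_eq_zero_of_lt (by omega)
    have h2 : n.choose m = 0 := Nat.choose_eq_zero_of_lt h
    simp [h1, h2]

lemma zc_L2 (k : ℚ) (n m : ℕ) :
    zc k (n + 1) (m + 1) = zc k n (m + 1) + zc k n m * ((k + 2 * n - m) / 12) := by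
  unfold zc
  rw [Finset.prod_range_succ' (f := fun j => ((n + 1 : ℕ) : ℚ) + k - 1 - j),
    Finset.prod_range_succ]
  have hp : ∏ j ∈ Finset.range m, (((n + 1 : ℕ) : ℚ) + k - 1 - ((j : ℕ) + 1 : ℕ)) =
      ∏ j ∈ Finset.range m, ((n : ℚ) + k - 1 - j) :=
    Finset.prod_congr rfl (fun j _ => by push_cast; ring)
  rw [hp]
  have hP : (Nat.choose (n+1) (m+1) : ℚ) = (n.choose m : ℚ) + (n.choose (m+1) : ℚ) := by
    rw [Nat.choose_succ_succ]; push_cast; ring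
  rw [hP]
  push_cast
  linear_combination ((∏ j ∈ Finset.range m, ((n : ℚ) + k - 1 - j)) * (1 / 12) ^ (m + 1)) *
    choose_cast n m

lemma zc_L1 (k : ℚ) {n j : ℕ} (h : j ≤ n) :
    zc k n (j + 1) * (((j : ℚ) + 1) * (1 / 12)) =
      ((((n : ℚ) - j) * (((n : ℚ) - j) + k - 1)) / 144) * zc k n j := by
  unfold zc
  rw [Finset.prod_range_succ]
  linear_combination ((∏ j' ∈ Finset.range j, ((n : ℚ) + k - 1 - j')) *
    ((n : ℚ) + k - 1 - j) * (1 / 12) ^ (j + 1) * (1 / 12)) * choose_cast n j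

variable {R : Type*} [CommRing R] [Algebra ℚ R]

lemma key (D : Derivation ℚ R R) (E2 E4 : R) (k : ℚ)
    (hE2 : (12 : ℚ) • D E2 = E2 ^ 2 - E4) (fseq : ℕ → R)
    (hrec : ∀ n : ℕ, fseq (n + 1) =
      (D (fseq n) - ((k + 2 * n) / 12) • (E2 * fseq n)) -
        ((n * (n + k - 1)) / 144) • (E4 * fseq (n - 1)))
    (n i : ℕ) (h : i ≤ n) :
    D (zc k n i • (fseq (n - i) * E2 ^ i)) =
        zc k n i • (fseq (n - i + 1) * E2 ^ i)
      + ((k + 2 * ((n - i : ℕ) : ℚ)) / 12) • (zc k n i • (fseq (n - i) * E2 ^ (i + 1)))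
      + zc k n i • (i • ((1 / 12 : ℚ) • (fseq (n - i) * E2 ^ (i + 1))))
      + ((((n - i : ℕ) : ℚ) * (((n - i : ℕ) : ℚ) + k - 1) / 144) •
            (zc k n i • ((fseq (n - (i + 1)) * E2 ^ i) * E4))
        - zc k n i • (i • ((1 / 12 : ℚ) • ((fseq (n - i) * E2 ^ (i - 1)) * E4)))) := by
  have hD2 : D E2 = (1 / 12 : ℚ) • (E2 ^ 2 - E4) := by
    have h12 : D E2 = (1 / 12 : ℚ) • ((12 : ℚ) • D E2) := by
      rw [smul_smul]; norm_num
    rw [h12, hE2]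
  have hDf : D (fseq (n - i)) = fseq (n - i + 1)
      + ((k + 2 * ((n - i : ℕ) : ℚ)) / 12) • (E2 * fseq (n - i))
      + (((n - i : ℕ) : ℚ) * (((n - i : ℕ) : ℚ) + k - 1) / 144) • (E4 * fseq (n - i - 1)) := by
    rw [hrec (n - i)]; abel
  have hidx : n - i - 1 = n - (i + 1) := by omega
  rw [D.map_smul, Derivation.leibniz, Derivation.leibniz_pow, hD2, hDf, hidx]
  rcases Nat.eq_zero_or_pos i with hi0 | hipos
  · subst hi0
    simp only [pow_zero, zero_smul, smul_zero, zero_add, add_zero, sub_zero, pow_one]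
    simp only [smul_eq_mul]
    simp only [Algebra.smul_def]
    ring
  · obtain ⟨j, rfl⟩ : ∃ j, i = j + 1 := ⟨i - 1, by omega⟩
    simp only [Nat.add_sub_cancel]
    simp only [smul_eq_mul]
    simp only [Algebra.smul_def, nsmul_eq_mul]
    push_cast
    ring

lemma step (D : Derivation ℚ R R) (E2 E4 : R) (k : ℚ)
    (hE2 : (12 : ℚ) • D E2 = E2 ^ 2 - E4) (fseq : ℕ → R)
    (hrec : ∀ n : ℕ, fseq (n + 1) =
      (D (fseq n) - ((k + 2 * n) / 12) • (E2 * fseq n)) -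
        ((n * (n + k - 1)) / 144) • (E4 * fseq (n - 1)))
    (n : ℕ) :
    D (∑ i ∈ Finset.range (n + 1), zc k n i • (fseq (n - i) * E2 ^ i)) =
      ∑ i ∈ Finset.range (n + 2), zc k (n + 1) i • (fseq (n + 1 - i) * E2 ^ i) := by
  rw [map_sum]
  rw [Finset.sum_congr rfl (fun i hi =>
    key D E2 E4 k hE2 fseq hrec n i (Nat.lt_succ_iff.mp (Finset.mem_range.mp hi)))]
  rw [Finset.sum_add_distrib, Finset.sum_add_distrib, Finset.sum_add_distrib,
    Finset.sum_sub_distrib]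
  -- the E4 parts cancel
  have hCG : (∑ i ∈ Finset.range (n + 1),
        (((n - i : ℕ) : ℚ) * (((n - i : ℕ) : ℚ) + k - 1) / 144) •
          (zc k n i • ((fseq (n - (i + 1)) * E2 ^ i) * E4)))
      = ∑ i ∈ Finset.range (n + 1),
          zc k n i • (i • ((1 / 12 : ℚ) • ((fseq (n - i) * E2 ^ (i - 1)) * E4))) := by
    have hterm : ∀ i ∈ Finset.range (n + 1),
        (((n - i : ℕ) : ℚ) * (((n - i : ℕ) : ℚ) + k - 1) / 144) •
          (zc k n i • ((fseq (n - (i + 1)) * E2 ^ i) * E4))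
        = (fun j => zc k n j • (j • ((1 / 12 : ℚ) • ((fseq (n - j) * E2 ^ (j - 1)) * E4))))
            (i + 1) := by
      intro i hi
      have hin : i ≤ n := Nat.lt_succ_iff.mp (Finset.mem_range.mp hi)
      simp only [Nat.add_sub_cancel]
      rw [smul_smul, ← Nat.cast_smul_eq_nsmul ℚ, smul_smul, smul_smul]
      congr 1
      push_cast [Nat.cast_sub hin]
      linear_combination - zc_L1 k hin
    rw [Finset.sum_congr rfl hterm]
    rw [Finset.sum_range_succ]
    conv_rhs => rw [Finset.sum_range_succ']
    simp [zc_top]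
  rw [hCG, sub_self, add_zero]
  -- now the main E2 part
  rw [Finset.sum_range_succ'
    (fun i => zc k (n + 1) i • (fseq (n + 1 - i) * E2 ^ i)) (n + 1)]
  have hsplit : ∀ j ∈ Finset.range (n + 1),
      zc k (n + 1) (j + 1) • (fseq (n + 1 - (j + 1)) * E2 ^ (j + 1)) =
        zc k n (j + 1) • (fseq (n - j) * E2 ^ (j + 1))
        + (((k + 2 * ((n - j : ℕ) : ℚ)) / 12) • (zc k n j • (fseq (n - j) * E2 ^ (j + 1)))
          + zc k n j • (j • ((1 / 12 : ℚ) • (fseq (n - j) * E2 ^ (j + 1))))) := by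
    intro j hj
    have hjn : j ≤ n := Nat.lt_succ_iff.mp (Finset.mem_range.mp hj)
    have hidx : n + 1 - (j + 1) = n - j := by omega
    rw [hidx, smul_smul, ← Nat.cast_smul_eq_nsmul ℚ, smul_smul, smul_smul, ← add_smul,
      ← add_smul]
    congr 1
    push_cast [Nat.cast_sub hjn]
    linear_combination zc_L2 k n j
  rw [Finset.sum_congr rfl hsplit]
  rw [Finset.sum_add_distrib, Finset.sum_add_distrib]
  -- match the A-sum
  have hA : (∑ i ∈ Finset.range (n + 1), zc k n i • (fseq (n - i + 1) * E2 ^ i))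
      = (∑ j ∈ Finset.range (n + 1), zc k n (j + 1) • (fseq (n - j) * E2 ^ (j + 1)))
        + zc k (n + 1) 0 • (fseq (n + 1 - 0) * E2 ^ 0) := by
    rw [Finset.sum_range_succ'] -- LHS
    rw [Finset.sum_range_succ]  -- first sum on RHS
    have h0 : zc k n (n + 1) • (fseq (n - n) * E2 ^ (n + 1)) = 0 := by
      rw [zc_top]; exact zero_smul _ _
    rw [h0, add_zero]
    congr 1
    · exact Finset.sum_congr rfl (fun j hj => by
        have : n - (j + 1) + 1 = n - j := by
          have := Finset.mem_range.mp hj; omega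
        rw [this])
    · simp [zc_zero]
  rw [hA]
  ring

end ZagierAux


/-- **Zagier's Taylor expansion formula**, in the abstract setting of a commutative
`ℚ`-algebra `R` with a derivation `D`, elements `E₂, E₄` satisfying the quasimodular
relation `DE₂ = (E₂² − E₄)/12`, a "weight" `k ∈ ℚ`, and the sequence `fₙ` defined by
`f₀ = f`, `f₋₁ = 0`,
`f_{n+1} = (Dfₙ − ((k+2n)/12)E₂fₙ) − (n(n+k−1)/144)E₄f_{n−1}`.
Then for all `n ≥ 0`,
`Dⁿf = Σ_{i=0}^{n} C(n,i)·(n+k−1)(n+k−2)⋯(n+k−i)·f_{n−i}·(E₂/12)ⁱ`. -/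
theorem zagier_formula {R : Type*} [CommRing R] [Algebra ℚ R]
    (D : Derivation ℚ R R) (E2 E4 f : R) (k : ℚ)
    (hE2 : (12 : ℚ) • D E2 = E2 ^ 2 - E4)
    (fseq : ℕ → R) (hf0 : fseq 0 = f)
    (hrec : ∀ n : ℕ, fseq (n + 1) =
      (D (fseq n) - ((k + 2 * n) / 12) • (E2 * fseq n)) -
        ((n * (n + k - 1)) / 144) • (E4 * fseq (n - 1)))
    (n : ℕ) :
    (⇑D)^[n] f = ∑ i ∈ Finset.range (n + 1),
      ((n.choose i : ℚ) * (∏ j ∈ Finset.range i, ((n : ℚ) + k - 1 - j)) * (1 / 12) ^ i) •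
        (fseq (n - i) * E2 ^ i) := by
  have main : ∀ m : ℕ, (⇑D)^[m] f =
      ∑ i ∈ Finset.range (m + 1), ZagierAux.zc k m i • (fseq (m - i) * E2 ^ i) := by
    intro m
    induction m with
    | zero => simp [ZagierAux.zc, hf0]
    | succ m ih =>
      rw [Function.iterate_succ_apply', ih]
      exact ZagierAux.step D E2 E4 k hE2 fseq hrec m
  exact main n
end
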